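/- Let K be a field, let p ≥ 2 be an integer not divisible by the characteristic of K, let ω ∈ K be a primitive p-th root of unity, and let k ≥ 1. Let φ = ω·id + Σ_{i=2}^{pk} φ_i be a system of formal power series whose homogeneous components vanish in degrees 0 and > pk and whose linear part is ω·id, and suppose (φ^p)_{≤pk} = id (φ is p-periodic modulo degree pk). Define u = −(ω/p)·(φ^p)_{pk+1} (a system homogeneous of degree pk+1) and set ψ = φ + u. Then the degree-r homogeneous component (ψ^p)_r is zero for every r with pk+2 ≤ r ≤ pk+p. -/

import Mathlib

noncomputable section

open MvPowerSeries

/-- A system of `n` formal power series in the `n` variables `x₁, …, xₙ` over `K`. -/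
abbrev Sys (n : ℕ) (K : Type) [Field K] := Fin n → MvPowerSeries (Fin n) K

variable {n : ℕ} {K : Type} [Field K]

/-- The degree-`k` homogeneous component `φ_k` of a system `φ`. -/
def homC (k : ℕ) (φ : Sys n K) : Sys n K :=
  fun i => (fun e => if (e.sum fun _ x => x) = k then MvPowerSeries.coeff (R := K) e (φ i) else 0 :
    MvPowerSeries (Fin n) K)

/-- The truncation `φ_{≤ m}` of a system `φ` to total degrees `≤ m`. -/
def truncLE (m : ℕ) (φ : Sys n K) : Sys n K :=
  fun i => (fun e => if (e.sum fun _ x => x) ≤ m then MvPowerSeries.coeff (R := K) e (φ i) else 0 :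
    MvPowerSeries (Fin n) K)

/-- Composition (substitution) `φ ∘ ψ` of systems of formal power series.  The coefficient of a
monomial `e` in `φ ∘ ψ` is computed by substituting `ψ` into a sufficiently large polynomial
truncation of `φ`; this agrees with the usual substitution whenever `ψ` has zero constant term. -/
def comp (φ ψ : Sys n K) : Sys n K :=
  fun i => (fun e =>
    MvPowerSeries.coeff (R := K) e
      (MvPolynomial.eval₂ (MvPowerSeries.C (σ := Fin n) (R := K)) ψ
        (MvPowerSeries.trunc K
          (Finsupp.equivFunOnFinite.symm fun _ => (e.sum fun _ x => x) + 1) (φ i))) :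
    MvPowerSeries (Fin n) K)

/-- The identity system `id = (x₁, …, xₙ)`. -/
def idSys : Sys n K := fun i => MvPowerSeries.X i

/-- The `m`-fold composition `φ^m` of a system with itself (`φ^0 = id`). -/
def iterComp (φ : Sys n K) : ℕ → Sys n K
  | 0 => idSys
  | m + 1 => comp (iterComp φ m) φ

/-- The Jacobian matrix of a system, i.e. its linear part viewed as a matrix. -/
def jac (φ : Sys n K) : Matrix (Fin n) (Fin n) K :=
  fun i j => MvPowerSeries.coeff (R := K) (Finsupp.single j 1) (φ i)

/-- The linear system of power series attached to a matrix `A`. -/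
def ofMatrix (A : Matrix (Fin n) (Fin n) K) : Sys n K :=
  fun i => ∑ j, MvPowerSeries.C (σ := Fin n) (R := K) (A i j) * MvPowerSeries.X j

def deg (e : Fin n →₀ ℕ) : ℕ := e.sum fun _ x => x

lemma deg_eq_sum (e : Fin n →₀ ℕ) : deg e = ∑ j, e j :=
  Finsupp.sum_fintype _ _ (fun _ => rfl)

lemma deg_add (a b : Fin n →₀ ℕ) : deg (a + b) = deg a + deg b := by
  simp [deg_eq_sum, Finset.sum_add_distrib]

lemma deg_single (j : Fin n) (m : ℕ) : deg (Finsupp.single j m) = m := by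
  simp [deg, Finsupp.sum_single_index]

lemma coord_le_deg (e : Fin n →₀ ℕ) (j : Fin n) : e j ≤ deg e := by
  rw [deg_eq_sum]
  exact Finset.single_le_sum (fun _ _ => Nat.zero_le _) (Finset.mem_univ j)

lemma deg_eq_zero_iff (e : Fin n →₀ ℕ) : deg e = 0 ↔ e = 0 := by
  rw [deg_eq_sum]
  constructor
  · intro h
    ext j
    have := Finset.sum_eq_zero_iff.mp h j (Finset.mem_univ j)
    simpa using this
  · rintro rfl; simp

lemma deg_pos_of_ne_zero {e : Fin n →₀ ℕ} (h : e ≠ 0) : 1 ≤ deg e := by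
  rcases Nat.eq_zero_or_pos (deg e) with h0 | h1
  · exact absurd ((deg_eq_zero_iff e).mp h0) h
  · exact h1

/-- `∏ j, χ j ^ m j`. -/
def prodPow (χ : Sys n K) (m : Fin n →₀ ℕ) : MvPowerSeries (Fin n) K := ∏ j, χ j ^ m j

lemma prodPow_zero (χ : Sys n K) : prodPow χ 0 = 1 := by simp [prodPow]

lemma prodPow_add (χ : Sys n K) (a b : Fin n →₀ ℕ) :
    prodPow χ (a + b) = prodPow χ a * prodPow χ b := by
  simp [prodPow, pow_add, Finset.prod_mul_distrib]

lemma prodPow_single (χ : Sys n K) (j : Fin n) (m : ℕ) :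
    prodPow χ (Finsupp.single j m) = χ j ^ m := by
  rw [prodPow]
  rw [Finset.prod_eq_single j]
  · simp
  · intro b _ hb; simp [Finsupp.single_apply_eq_zero.mpr, hb.symm,
      Finsupp.single_eq_of_ne (Ne.symm hb)]
  · intro h; exact absurd (Finset.mem_univ j) h

lemma exists_peel {m : Fin n →₀ ℕ} (h : m ≠ 0) :
    ∃ (j : Fin n) (m' : Fin n →₀ ℕ), m = m' + Finsupp.single j 1 ∧ deg m' + 1 = deg m := by
  obtain ⟨j, hj⟩ : ∃ j, m j ≠ 0 := by
    by_contra hc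
    push_neg at hc
    exact h (Finsupp.ext fun j => hc j)
  refine ⟨j, m - Finsupp.single j 1, ?_, ?_⟩
  · ext i
    by_cases hij : i = j
    · subst hij
      simp [Finsupp.single_apply, Nat.sub_add_cancel (Nat.one_le_iff_ne_zero.mpr hj)]
    · simp [Finsupp.single_apply, Ne.symm hij, hij]
  · have h1 : m - Finsupp.single j 1 + Finsupp.single j 1 = m := by
      ext i
      by_cases hij : i = j
      · subst hij
        simp [Finsupp.single_apply, Nat.sub_add_cancel (Nat.one_le_iff_ne_zero.mpr hj)]
      · simp [Finsupp.single_apply, Ne.symm hij, hij]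
    conv_rhs => rw [← h1]
    rw [deg_add, deg_single]

lemma prodPow_zero_sys {m : Fin n →₀ ℕ} (h : m ≠ 0) : prodPow (0 : Sys n K) m = 0 := by
  obtain ⟨j, m', rfl, _⟩ := exists_peel h
  rw [prodPow_add, prodPow_single]
  simp

def Const0 (χ : Sys n K) : Prop := ∀ j, coeff (R := K) 0 (χ j) = 0

/-- Master comparison lemma: if two systems with zero constant term agree on all
coefficients of degree `≤ d`, then the coefficients of `prodPow` at `e` agree as long as
`deg e + 1 ≤ d + deg m`. -/
lemma master : ∀ (M : ℕ) (m : Fin n →₀ ℕ), deg m = M →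
    ∀ (d : ℕ) (χ χ' : Sys n K), Const0 χ → Const0 χ' →
    (∀ j e', deg e' ≤ d → coeff (R := K) e' (χ j) = coeff (R := K) e' (χ' j)) →
    ∀ e : Fin n →₀ ℕ, m ≠ 0 → deg e + 1 ≤ d + deg m →
    coeff (R := K) e (prodPow χ m) = coeff (R := K) e (prodPow χ' m) := by
  intro M
  induction M using Nat.strong_induction_on with
  | _ M IH =>
    intro m hm d χ χ' hχ hχ' hag e hm0 hde
    obtain ⟨j0, m', rfl, hdm⟩ := exists_peel hm0
    rw [prodPow_add, prodPow_single, pow_one, prodPow_add, prodPow_single, pow_one,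
      mul_comm (prodPow χ m') _, mul_comm (prodPow χ' m') _]
    rw [MvPowerSeries.coeff_mul, MvPowerSeries.coeff_mul]
    apply Finset.sum_congr rfl
    rintro ⟨u, v⟩ huv
    rw [Finset.HasAntidiagonal.mem_antidiagonal] at huv
    have hdeg_uv : deg u + deg v = deg e := by rw [← huv, deg_add]
    by_cases hm' : m' = 0
    · -- deg m = 1 case
      subst hm'
      simp only [prodPow_zero, MvPowerSeries.coeff_one]
      by_cases hv0 : v = 0
      · subst hv0
        simp only [if_pos rfl, eq_self_iff_true, if_true, mul_one]
        have hu : u = e := by simpa using huv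
        subst hu
        have hd0 : deg (0 : Fin n →₀ ℕ) = 0 := (deg_eq_zero_iff _).mpr rfl
        have hsd : deg ((0 : Fin n →₀ ℕ) + Finsupp.single j0 1) = 1 := by
          rw [deg_add, deg_single, hd0]
        have := hag j0 u (by omega)
        simp [this]
      · simp [hv0]
    · by_cases hu0 : u = 0
      · subst hu0
        simp only [hχ j0, hχ' j0, zero_mul]
      · have hu1 : 1 ≤ deg u := deg_pos_of_ne_zero hu0
        have hm'1 : 1 ≤ deg m' := deg_pos_of_ne_zero hm'
        -- coefficients of the tails agree
        have htail : coeff (R := K) v (prodPow χ m') = coeff (R := K) v (prodPow χ' m') := by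
          apply IH (deg m') (by omega) m' rfl d χ χ' hχ hχ' hag v hm'
          omega
        by_cases hv : deg v + 1 ≤ deg m'
        · -- both tails vanish
          have hz : coeff (R := K) v (prodPow χ m') = 0 := by
            rw [IH (deg m') (by omega) m' rfl 0 χ 0 hχ (fun j => by simp)
              (fun j e' he' => by
                have : e' = 0 := (deg_eq_zero_iff e').mp (Nat.le_zero.mp he')
                subst this
                rw [hχ j]; simp) v hm' (by omega)]
            rw [prodPow_zero_sys hm']
            simp
          have hz' : coeff (R := K) v (prodPow χ' m') = 0 := by
            rw [IH (deg m') (by omega) m' rfl 0 χ' 0 hχ' (fun j => by simp)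
              (fun j e' he' => by
                have : e' = 0 := (deg_eq_zero_iff e').mp (Nat.le_zero.mp he')
                subst this
                rw [hχ' j]; simp) v hm' (by omega)]
            rw [prodPow_zero_sys hm']
            simp
          rw [hz, hz', mul_zero, mul_zero]
        · -- deg v ≥ deg m', so deg u ≤ d
          have hud : deg u ≤ d := by omega
          rw [hag j0 u hud, htail]

lemma deg_eq_one {e : Fin n →₀ ℕ} (h : deg e = 1) : ∃ j, e = Finsupp.single j 1 := by
  have he0 : e ≠ 0 := by
    intro hc; rw [hc, (deg_eq_zero_iff _).mpr rfl] at h; omega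
  obtain ⟨j, m', rfl, hd⟩ := exists_peel he0
  have : deg m' = 0 := by omega
  have : m' = 0 := (deg_eq_zero_iff _).mp this
  exact ⟨j, by rw [this, zero_add]⟩

/-- Lemma A: low-degree coefficients of high-degree products vanish. -/
lemma coeff_prodPow_eq_zero {χ : Sys n K} (hχ : Const0 χ) {m e : Fin n →₀ ℕ}
    (h : deg e < deg m) : coeff (R := K) e (prodPow χ m) = 0 := by
  have hm0 : m ≠ 0 := by
    intro hc; rw [hc, (deg_eq_zero_iff _).mpr rfl] at h; omega
  rw [master (deg m) m rfl 0 χ 0 hχ (fun j => by simp)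
    (fun j e' he' => by
      have : e' = 0 := (deg_eq_zero_iff e').mp (Nat.le_zero.mp he')
      subst this; rw [hχ j]; simp) e hm0 (by omega)]
  rw [prodPow_zero_sys hm0]
  simp

/-- Lemma Alin: when the system has linear part `c • id`, low coefficients of `prodPow`
are those of `c ^ deg m • monomial m`. -/
lemma coeff_prodPow_lin {χ : Sys n K} {c : K} (hχ : Const0 χ)
    (hlin : ∀ i j, coeff (R := K) (Finsupp.single j 1) (χ i) = if i = j then c else 0) :
    ∀ (M : ℕ) (m : Fin n →₀ ℕ), deg m = M → ∀ e, deg e ≤ deg m →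
    coeff (R := K) e (prodPow χ m) = if e = m then c ^ deg m else 0 := by
  intro M
  induction M using Nat.strong_induction_on with
  | _ M IH =>
    intro m hM e hde
    by_cases hm0 : m = 0
    · subst hm0
      have h0 : deg (0 : Fin n →₀ ℕ) = 0 := (deg_eq_zero_iff _).mpr rfl
      have he : e = 0 := (deg_eq_zero_iff _).mp (by omega)
      subst he
      simp [prodPow_zero, MvPowerSeries.coeff_one, h0]
    · obtain ⟨j0, m', rfl, hdm⟩ := exists_peel hm0
      set m := m' + Finsupp.single j0 1 with hmdef
      rw [prodPow_add, prodPow_single, pow_one, MvPowerSeries.coeff_mul]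
      have key : ∀ uv : (Fin n →₀ ℕ) × (Fin n →₀ ℕ), uv ∈ Finset.HasAntidiagonal.antidiagonal e →
          uv ≠ (m', Finsupp.single j0 1) →
          coeff (R := K) uv.1 (prodPow χ m') * coeff (R := K) uv.2 (χ j0) = 0 := by
        rintro ⟨u, v⟩ huv hne
        rw [Finset.HasAntidiagonal.mem_antidiagonal] at huv
        have hduv : deg u + deg v = deg e := by rw [← huv, deg_add]
        by_cases hlow : deg u < deg m'
        · rw [coeff_prodPow_eq_zero hχ hlow, zero_mul]
        · push_neg at hlow
          by_cases hv0 : v = 0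
          · subst hv0; rw [hχ j0, mul_zero]
          · have hv1 : 1 ≤ deg v := deg_pos_of_ne_zero hv0
            have hdu : deg u ≤ deg m' := by omega
            rw [IH (deg m') (by omega) m' rfl u hdu]
            by_cases hu : u = m'
            · subst hu
              have hdv : deg v = 1 := by omega
              obtain ⟨j, rfl⟩ := deg_eq_one hdv
              rw [hlin j0 j]
              have : ¬ j0 = j := by
                intro hc; subst hc
                exact hne rfl
              simp [this]
            · simp [hu]
      by_cases he : e = m
      · subst he
        rw [Finset.sum_eq_single_of_mem (m', Finsupp.single j0 1)
          (by rw [Finset.HasAntidiagonal.mem_antidiagonal]) key]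
        rw [IH (deg m') (by omega) m' rfl m' le_rfl, hlin j0 j0]
        simp [← hdm, pow_succ]
      · rw [Finset.sum_eq_zero]
        · simp [he]
        · intro uv huv
          apply key uv huv
          intro hc
          subst hc
          rw [Finset.HasAntidiagonal.mem_antidiagonal] at huv
          exact he huv.symm

/-- The exponent bound used in `comp`. -/
def NN (e : Fin n →₀ ℕ) : Fin n →₀ ℕ := Finsupp.equivFunOnFinite.symm fun _ => deg e + 1

/-- Substitution of a system into a single power series. -/
def subs (χ : Sys n K) (f : MvPowerSeries (Fin n) K) : MvPowerSeries (Fin n) K :=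
  fun e => MvPowerSeries.coeff (R := K) e
    (MvPolynomial.eval₂ (MvPowerSeries.C (σ := Fin n) (R := K)) χ (MvPowerSeries.trunc K (NN e) f))

lemma comp_eq_subs (φ ψ : Sys n K) (i : Fin n) : comp φ ψ i = subs ψ (φ i) := rfl

lemma NN_apply (e : Fin n →₀ ℕ) (j : Fin n) : NN e j = deg e + 1 := rfl

lemma lt_NN_of_deg_le {n : ℕ} (hn : n ≠ 0) {a e : Fin n →₀ ℕ} (h : deg a ≤ deg e) :
    a < NN e := by
  rw [lt_iff_le_and_ne]
  constructor
  · intro j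
    rw [NN_apply]
    have := coord_le_deg a j
    omega
  · intro hc
    have : a ⟨0, Nat.pos_of_ne_zero hn⟩ = deg e + 1 := by rw [hc]; rfl
    have h2 := coord_le_deg a ⟨0, Nat.pos_of_ne_zero hn⟩
    omega

/-- The workhorse coefficient formula for substitution. -/
lemma coeff_subs (χ : Sys n K) (f : MvPowerSeries (Fin n) K) (e : Fin n →₀ ℕ) :
    coeff (R := K) e (subs χ f) =
      ∑ m ∈ Finset.Iio (NN e), coeff (R := K) m f * coeff (R := K) e (prodPow χ m) := by
  rw [coeff_apply, subs]
  rw [MvPolynomial.eval₂_eq']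
  rw [map_sum]
  rw [Finset.sum_subset (fun m hm => ?_)]
  · apply Finset.sum_congr rfl
    intro m hm
    rw [Finset.mem_Iio] at hm
    rw [MvPowerSeries.coeff_trunc, if_pos hm, ← prodPow]
    rw [MvPowerSeries.coeff_C_mul]
  · -- terms outside the support vanish
    intro m _ hm
    rw [MvPolynomial.notMem_support_iff] at hm
    rw [hm]
    simp
  · -- support ⊆ Iio (NN e)
    rw [MvPolynomial.mem_support_iff, MvPowerSeries.coeff_trunc] at hm
    rw [Finset.mem_Iio]
    by_contra hc
    rw [if_neg hc] at hm
    exact hm rfl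

lemma subs_add_coeff (χ : Sys n K) (f g : MvPowerSeries (Fin n) K) (e : Fin n →₀ ℕ) :
    coeff (R := K) e (subs χ (f + g)) = coeff (R := K) e (subs χ f) + coeff (R := K) e (subs χ g) := by
  rw [coeff_subs, coeff_subs, coeff_subs, ← Finset.sum_add_distrib]
  apply Finset.sum_congr rfl
  intro m _
  rw [map_add, add_mul]

lemma subs_sub_coeff (χ : Sys n K) (f g : MvPowerSeries (Fin n) K) (e : Fin n →₀ ℕ) :
    coeff (R := K) e (subs χ (f - g)) = coeff (R := K) e (subs χ f) - coeff (R := K) e (subs χ g) := by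
  rw [coeff_subs, coeff_subs, coeff_subs, ← Finset.sum_sub_distrib]
  apply Finset.sum_congr rfl
  intro m _
  rw [map_sub, sub_mul]

lemma subs_const0 {χ : Sys n K} (hχ : Const0 χ) {f : MvPowerSeries (Fin n) K}
    (hf : coeff (R := K) 0 f = 0) : coeff (R := K) 0 (subs χ f) = 0 := by
  rw [coeff_subs]
  apply Finset.sum_eq_zero
  intro m _
  by_cases hm : m = 0
  · subst hm; rw [hf, zero_mul]
  · rw [coeff_prodPow_eq_zero hχ (by
      rw [(deg_eq_zero_iff (0 : Fin n →₀ ℕ)).mpr rfl]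
      exact deg_pos_of_ne_zero hm), mul_zero]

/-- Dependence only on coefficients of degree at most `d`. -/
lemma subs_dep {χ χ' : Sys n K} (hχ : Const0 χ) (hχ' : Const0 χ') (d : ℕ)
    (hag : ∀ j e', deg e' ≤ d → coeff (R := K) e' (χ j) = coeff (R := K) e' (χ' j))
    {f f' : MvPowerSeries (Fin n) K}
    (hff' : ∀ m, deg m ≤ d → coeff (R := K) m f = coeff (R := K) m f')
    {e : Fin n →₀ ℕ} (he : deg e ≤ d) :
    coeff (R := K) e (subs χ f) = coeff (R := K) e (subs χ' f') := by
  rw [coeff_subs, coeff_subs]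
  apply Finset.sum_congr rfl
  intro m _
  by_cases hm : m = 0
  · subst hm
    simp only [prodPow_zero]
    rw [hff' 0 (by rw [(deg_eq_zero_iff _).mpr rfl]; omega)]
  · by_cases hdm : deg e < deg m
    · rw [coeff_prodPow_eq_zero hχ hdm, coeff_prodPow_eq_zero hχ' hdm, mul_zero, mul_zero]
    · push_neg at hdm
      rw [hff' m (le_trans hdm he),
        master (deg m) m rfl d χ χ' hχ hχ' hag e hm
          (by have := deg_pos_of_ne_zero hm; omega)]

/-- G2: substituting into a series supported in degrees `≥ r`. -/
lemma subs_high {χ : Sys n K} {c : K} (hn : n ≠ 0) (hχ : Const0 χ)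
    (hlin : ∀ i j, coeff (R := K) (Finsupp.single j 1) (χ i) = if i = j then c else 0)
    {F : MvPowerSeries (Fin n) K} {r : ℕ} (hF : ∀ m, deg m < r → coeff (R := K) m F = 0)
    {e : Fin n →₀ ℕ} (he : deg e = r) :
    coeff (R := K) e (subs χ F) = c ^ r * coeff (R := K) e F := by
  rw [coeff_subs]
  rw [Finset.sum_eq_single e]
  · by_cases hdm : deg e ≤ deg e
    · rw [coeff_prodPow_lin hχ hlin (deg e) e rfl e le_rfl, if_pos rfl, he, mul_comm]
    · omega
  · intro m _ hme
    by_cases hdm : deg m < r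
    · rw [hF m hdm, zero_mul]
    · rw [coeff_prodPow_lin hχ hlin (deg m) m rfl e (by omega),
        if_neg (fun hc => hme hc.symm), mul_zero]
  · intro he'
    exact absurd (Finset.mem_Iio.mpr (lt_NN_of_deg_le hn (le_refl (deg e)))) he'

/-- FVI: first variation with respect to the inner system. -/
lemma subs_fvi {χ χ' : Sys n K} (hn : n ≠ 0) (hχ : Const0 χ) (hχ' : Const0 χ')
    {r : ℕ} (hr : 1 ≤ r)
    (hag : ∀ j e', deg e' < r → coeff (R := K) e' (χ j) = coeff (R := K) e' (χ' j))
    (F : MvPowerSeries (Fin n) K) {e : Fin n →₀ ℕ} (he : deg e = r) :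
    coeff (R := K) e (subs χ F) = coeff (R := K) e (subs χ' F) +
      ∑ j, coeff (R := K) (Finsupp.single j 1) F * (coeff (R := K) e (χ j) - coeff (R := K) e (χ' j)) := by
  rw [coeff_subs, coeff_subs]
  rw [← sub_eq_iff_eq_add']  -- sum - sum = Σ_j ...
  rw [← Finset.sum_sub_distrib]
  have hterm : ∀ m ∈ Finset.Iio (NN e),
      coeff (R := K) m F * coeff (R := K) e (prodPow χ m) - coeff (R := K) m F * coeff (R := K) e (prodPow χ' m)
      = coeff (R := K) m F * (coeff (R := K) e (prodPow χ m) - coeff (R := K) e (prodPow χ' m)) := by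
    intro m _; ring
  rw [Finset.sum_congr rfl hterm]
  have hsubset : (Finset.univ.image fun j : Fin n => Finsupp.single j 1) ⊆
      Finset.Iio (NN e) := by
    intro m hm
    rw [Finset.mem_image] at hm
    obtain ⟨j', _, rfl⟩ := hm
    rw [Finset.mem_Iio]
    exact lt_NN_of_deg_le hn (by rw [deg_single]; omega)
  rw [← Finset.sum_subset hsubset (fun m hm hmim => ?_)]
  · rw [Finset.sum_image
      (fun x _ y _ hxy => Finsupp.single_left_injective (one_ne_zero) hxy)]
    apply Finset.sum_congr rfl
    intro j _
    simp only [prodPow_single, pow_one]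
  · by_cases hm0 : m = 0
    · subst hm0; simp only [prodPow_zero]; rw [sub_self, mul_zero]
    · have h1 : 1 ≤ deg m := deg_pos_of_ne_zero hm0
      by_cases hdm : deg m = 1
      · obtain ⟨j, rfl⟩ := deg_eq_one hdm
        exact absurd (Finset.mem_image.mpr ⟨j, Finset.mem_univ j, rfl⟩) hmim
      · rw [master (deg m) m rfl (r-1) χ χ' hχ hχ'
          (fun j e' he' => hag j e' (by omega)) e hm0 (by omega), sub_self, mul_zero]

lemma prodPow_X (m : Fin n →₀ ℕ) :
    prodPow (fun j => MvPowerSeries.X j : Sys n K) m = MvPowerSeries.monomial (R := K) m 1 := by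
  rw [prodPow]
  have h1 : ∀ j : Fin n, (MvPowerSeries.X j : MvPowerSeries (Fin n) K) ^ (m j)
      = MvPowerSeries.monomial (R := K) (Finsupp.single j (m j)) 1 := fun j =>
    MvPowerSeries.X_pow_eq j (m j)
  rw [Finset.prod_congr rfl (fun j _ => h1 j)]
  have h2 : ∀ (s : Finset (Fin n)),
      (∏ j ∈ s, MvPowerSeries.monomial (R := K) (Finsupp.single j (m j)) (1:K))
        = MvPowerSeries.monomial (R := K) (∑ j ∈ s, Finsupp.single j (m j)) 1 := by
    intro s
    induction s using Finset.induction_on with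
    | empty => simp [MvPowerSeries.monomial_zero_one]
    | insert _ _ hx ih =>
      rw [Finset.prod_insert hx, Finset.sum_insert hx, ih,
        MvPowerSeries.monomial_mul_monomial, one_mul]
  rw [h2]
  congr 1
  have := Finsupp.sum_fintype m (fun j k => Finsupp.single j k) (fun j => Finsupp.single_zero j)
  rw [← this, Finsupp.sum_single]

lemma coeff_prodPow_X (e m : Fin n →₀ ℕ) :
    coeff (R := K) e (prodPow (fun j => MvPowerSeries.X j : Sys n K) m)
      = if e = m then 1 else 0 := by
  rw [prodPow_X, MvPowerSeries.coeff_monomial]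

/-- substituting the identity system. -/
lemma subs_idSys (hn : n ≠ 0) (F : MvPowerSeries (Fin n) K) (e : Fin n →₀ ℕ) :
    coeff (R := K) e (subs (fun j => MvPowerSeries.X j : Sys n K) F) = coeff (R := K) e F := by
  rw [coeff_subs]
  rw [Finset.sum_eq_single e]
  · rw [coeff_prodPow_X, if_pos rfl, mul_one]
  · intro m _ hme
    rw [coeff_prodPow_X, if_neg (fun hc => hme hc.symm), mul_zero]
  · intro he'
    exact absurd (Finset.mem_Iio.mpr (lt_NN_of_deg_le hn le_rfl)) he'

/-- substituting into a single variable. -/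
lemma subs_X {χ : Sys n K} (hχ : Const0 χ) (i : Fin n) (e : Fin n →₀ ℕ) :
    coeff (R := K) e (subs χ (MvPowerSeries.X i)) = coeff (R := K) e (χ i) := by
  rw [coeff_subs]
  by_cases hde : 1 ≤ deg e
  · rw [Finset.sum_eq_single (Finsupp.single i 1)]
    · rw [MvPowerSeries.coeff_X, if_pos rfl, prodPow_single, pow_one, one_mul]
    · intro m _ hme
      rw [MvPowerSeries.coeff_X, if_neg hme, zero_mul]
    · intro hc
      have hn : n ≠ 0 := fun h0 => by subst h0; exact i.elim0
      exact absurd (Finset.mem_Iio.mpr (lt_NN_of_deg_le hn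
        (by rw [deg_single]; omega))) hc
  · have he0 : e = 0 := (deg_eq_zero_iff e).mp (by omega)
    subst he0
    rw [hχ i]
    apply Finset.sum_eq_zero
    intro m _
    by_cases hm0 : m = 0
    · subst hm0; rw [MvPowerSeries.coeff_X, if_neg (by
        intro hc
        have := deg_single i 1
        rw [← hc, (deg_eq_zero_iff _).mpr rfl] at this
        omega), zero_mul]
    · rw [coeff_prodPow_eq_zero hχ (by
        rw [(deg_eq_zero_iff (0:Fin n →₀ ℕ)).mpr rfl]
        exact deg_pos_of_ne_zero hm0), mul_zero]

lemma subsum {χ : Sys n K} (hχ : Const0 χ) (u : Fin n →₀ ℕ) (F : (Fin n →₀ ℕ) → K)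
    (S T : Finset (Fin n →₀ ℕ)) (hST : ∀ a, deg a ≤ deg u → (a ∈ S ↔ a ∈ T)) :
    ∑ a ∈ S, F a * coeff (R := K) u (prodPow χ a) = ∑ a ∈ T, F a * coeff (R := K) u (prodPow χ a) := by
  have key : ∀ (A B : Finset (Fin n →₀ ℕ)), (∀ a, deg a ≤ deg u → a ∈ A → a ∈ B) →
      ∑ a ∈ A ∩ B, F a * coeff (R := K) u (prodPow χ a) = ∑ a ∈ A, F a * coeff (R := K) u (prodPow χ a) := by
    intro A B hAB
    apply Finset.sum_subset (Finset.inter_subset_left)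
    intro a ha hna
    have hb : a ∉ B := fun hb => hna (Finset.mem_inter.mpr ⟨ha, hb⟩)
    have hda : deg u < deg a := by
      by_contra hc
      push_neg at hc
      exact hb (hAB a hc ha)
    rw [coeff_prodPow_eq_zero hχ hda, mul_zero]
  rw [← key S T (fun a ha hs => (hST a ha).mp hs), Finset.inter_comm,
    key T S (fun a ha hs => (hST a ha).mpr hs)]

lemma zero_mem_Iio_NN (hn : n ≠ 0) (e : Fin n →₀ ℕ) : (0 : Fin n →₀ ℕ) ∈ Finset.Iio (NN e) :=
  Finset.mem_Iio.mpr (lt_NN_of_deg_le hn (by rw [(deg_eq_zero_iff _).mpr rfl]; omega))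

lemma subs_one (hn : n ≠ 0) (χ : Sys n K) : subs χ (1 : MvPowerSeries (Fin n) K) = 1 := by
  apply MvPowerSeries.ext
  intro e
  rw [coeff_subs, Finset.sum_eq_single 0]
  · rw [prodPow_zero, MvPowerSeries.coeff_one, if_pos rfl, one_mul]
  · intro m _ hm
    rw [MvPowerSeries.coeff_one, if_neg hm, zero_mul]
  · intro h
    exact absurd (zero_mem_Iio_NN hn e) h

lemma subs_mul (hn : n ≠ 0) {χ : Sys n K} (hχ : Const0 χ)
    (f g : MvPowerSeries (Fin n) K) :
    subs χ (f * g) = subs χ f * subs χ g := by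
  apply MvPowerSeries.ext
  intro e
  set S := Finset.Iio (NN e) with hS
  have hmemS : ∀ a : Fin n →₀ ℕ, deg a ≤ deg e → a ∈ S := fun a ha =>
    Finset.mem_Iio.mpr (lt_NN_of_deg_le hn ha)
  have lhs1 : coeff (R := K) e (subs χ (f * g)) =
      ∑ m ∈ S, ∑ ab ∈ Finset.HasAntidiagonal.antidiagonal m,
        coeff (R := K) ab.1 f * coeff (R := K) ab.2 g * coeff (R := K) e (prodPow χ (ab.1 + ab.2)) := by
    rw [coeff_subs]
    apply Finset.sum_congr rfl
    intro m _
    rw [MvPowerSeries.coeff_mul, Finset.sum_mul]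
    apply Finset.sum_congr rfl
    intro ab hab
    rw [Finset.HasAntidiagonal.mem_antidiagonal] at hab
    rw [hab]
  have claim1 : ∑ m ∈ S, ∑ ab ∈ Finset.HasAntidiagonal.antidiagonal m,
        coeff (R := K) ab.1 f * coeff (R := K) ab.2 g * coeff (R := K) e (prodPow χ (ab.1 + ab.2)) =
      ∑ ab ∈ S ×ˢ S, coeff (R := K) ab.1 f * coeff (R := K) ab.2 g * coeff (R := K) e (prodPow χ (ab.1 + ab.2)) := by
    rw [Finset.sum_sigma']
    have hvan : ∀ ab : (Fin n →₀ ℕ) × (Fin n →₀ ℕ),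
        coeff (R := K) ab.1 f * coeff (R := K) ab.2 g * coeff (R := K) e (prodPow χ (ab.1 + ab.2)) ≠ 0 →
        deg (ab.1 + ab.2) ≤ deg e := by
      intro ab hab
      by_contra hc
      push_neg at hc
      exact hab (by rw [coeff_prodPow_eq_zero hχ hc, mul_zero])
    rw [← Finset.sum_filter_of_ne
        (p := fun x : (_ : Fin n →₀ ℕ) × ((Fin n →₀ ℕ) × (Fin n →₀ ℕ)) =>
        deg (x.2.1 + x.2.2) ≤ deg e) (fun x _ hx => hvan x.2 hx)]
    rw [← Finset.sum_filter_of_ne (p := fun ab : (Fin n →₀ ℕ) × (Fin n →₀ ℕ) =>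
        deg (ab.1 + ab.2) ≤ deg e) (fun x _ hx => hvan x hx)]
    apply Finset.sum_nbij'
      (i := fun x : (_ : Fin n →₀ ℕ) × ((Fin n →₀ ℕ) × (Fin n →₀ ℕ)) => x.2)
      (j := fun ab : (Fin n →₀ ℕ) × (Fin n →₀ ℕ) =>
        (⟨ab.1 + ab.2, ab⟩ : (_ : Fin n →₀ ℕ) × ((Fin n →₀ ℕ) × (Fin n →₀ ℕ))))
    · rintro ⟨m, ⟨a, b⟩⟩ hx
      rw [Finset.mem_filter] at hx ⊢
      obtain ⟨_, hx2⟩ := hx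
      simp only at hx2 ⊢
      have hd := deg_add a b
      exact ⟨Finset.mem_product.mpr ⟨hmemS a (by omega), hmemS b (by omega)⟩, hx2⟩
    · rintro ⟨a, b⟩ hx
      rw [Finset.mem_filter] at hx ⊢
      obtain ⟨_, hx2⟩ := hx
      simp only at hx2 ⊢
      exact ⟨Finset.mem_sigma.mpr ⟨hmemS _ hx2, Finset.HasAntidiagonal.mem_antidiagonal.mpr rfl⟩, hx2⟩
    · rintro ⟨m, ⟨a, b⟩⟩ hx
      rw [Finset.mem_filter, Finset.mem_sigma] at hx
      obtain ⟨⟨_, hab⟩, _⟩ := hx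
      rw [Finset.HasAntidiagonal.mem_antidiagonal] at hab
      simp only
      exact Sigma.ext (by simpa using hab) (by simp)
    · rintro ⟨a, b⟩ _
      rfl
    · rintro ⟨m, ⟨a, b⟩⟩ _
      rfl
  have claim2 : ∀ a b : Fin n →₀ ℕ,
      coeff (R := K) e (prodPow χ (a + b)) =
      ∑ uv ∈ Finset.HasAntidiagonal.antidiagonal e, coeff (R := K) uv.1 (prodPow χ a) * coeff (R := K) uv.2 (prodPow χ b) := by
    intro a b
    rw [prodPow_add, MvPowerSeries.coeff_mul]
  have rhs1 : coeff (R := K) e (subs χ f * subs χ g) =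
      ∑ ab ∈ S ×ˢ S, coeff (R := K) ab.1 f * coeff (R := K) ab.2 g * coeff (R := K) e (prodPow χ (ab.1 + ab.2)) := by
    calc coeff (R := K) e (subs χ f * subs χ g)
        = ∑ uv ∈ Finset.HasAntidiagonal.antidiagonal e, ∑ a ∈ S, ∑ b ∈ S,
            coeff (R := K) a f * coeff (R := K) b g *
              (coeff (R := K) uv.1 (prodPow χ a) * coeff (R := K) uv.2 (prodPow χ b)) := by
          rw [MvPowerSeries.coeff_mul]
          apply Finset.sum_congr rfl
          rintro ⟨u, v⟩ huv
          rw [Finset.HasAntidiagonal.mem_antidiagonal] at huv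
          have hdu : deg u + deg v = deg e := by rw [← huv, deg_add]
          rw [coeff_subs, coeff_subs]
          rw [subsum hχ u (fun a => coeff (R := K) a f) _ S
            (fun a ha => ⟨fun _ => hmemS a (by omega), fun _ =>
              Finset.mem_Iio.mpr (lt_NN_of_deg_le hn ha)⟩)]
          rw [subsum hχ v (fun b => coeff (R := K) b g) _ S
            (fun b hb => ⟨fun _ => hmemS b (by omega), fun _ =>
              Finset.mem_Iio.mpr (lt_NN_of_deg_le hn hb)⟩)]
          rw [Finset.sum_mul_sum]
          apply Finset.sum_congr rfl
          intro a _
          apply Finset.sum_congr rfl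
          intro b _
          ring
      _ = ∑ a ∈ S, ∑ uv ∈ Finset.HasAntidiagonal.antidiagonal e, ∑ b ∈ S,
            coeff (R := K) a f * coeff (R := K) b g *
              (coeff (R := K) uv.1 (prodPow χ a) * coeff (R := K) uv.2 (prodPow χ b)) := Finset.sum_comm
      _ = ∑ a ∈ S, ∑ b ∈ S, ∑ uv ∈ Finset.HasAntidiagonal.antidiagonal e,
            coeff (R := K) a f * coeff (R := K) b g *
              (coeff (R := K) uv.1 (prodPow χ a) * coeff (R := K) uv.2 (prodPow χ b)) :=
          Finset.sum_congr rfl (fun a _ => Finset.sum_comm)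
      _ = ∑ a ∈ S, ∑ b ∈ S,
            coeff (R := K) a f * coeff (R := K) b g * coeff (R := K) e (prodPow χ (a + b)) := by
          apply Finset.sum_congr rfl
          intro a _
          apply Finset.sum_congr rfl
          intro b _
          rw [← Finset.mul_sum, claim2 a b]
      _ = ∑ ab ∈ S ×ˢ S, coeff (R := K) ab.1 f * coeff (R := K) ab.2 g *
            coeff (R := K) e (prodPow χ (ab.1 + ab.2)) := by
          rw [Finset.sum_product]
  rw [lhs1, claim1, rhs1]

lemma subs_prodPow (hn : n ≠ 0) {χ ψ : Sys n K} (hχ : Const0 χ) :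
    ∀ (M : ℕ) (l : Fin n →₀ ℕ), deg l = M →
    subs χ (prodPow ψ l) = prodPow (fun j => subs χ (ψ j)) l := by
  intro M
  induction M using Nat.strong_induction_on with
  | _ M IH =>
    intro l hM
    by_cases hl0 : l = 0
    · subst hl0
      rw [prodPow_zero, prodPow_zero, subs_one hn]
    · obtain ⟨j0, l', rfl, hdl⟩ := exists_peel hl0
      rw [prodPow_add, prodPow_add, prodPow_single, prodPow_single, pow_one, pow_one]
      rw [subs_mul hn hχ, IH (deg l') (by omega) l' rfl]

lemma subs_assoc (hn : n ≠ 0) {ψ χ : Sys n K} (hψ : Const0 ψ) (hχ : Const0 χ)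
    (f : MvPowerSeries (Fin n) K) :
    subs χ (subs ψ f) = subs (fun j => subs χ (ψ j)) f := by
  apply MvPowerSeries.ext
  intro e
  set S := Finset.Iio (NN e) with hS
  have hmemS : ∀ a : Fin n →₀ ℕ, deg a ≤ deg e → a ∈ S := fun a ha =>
    Finset.mem_Iio.mpr (lt_NN_of_deg_le hn ha)
  calc coeff (R := K) e (subs χ (subs ψ f))
      = ∑ m ∈ S, (∑ l ∈ S, coeff (R := K) l f * coeff (R := K) m (prodPow ψ l)) *
          coeff (R := K) e (prodPow χ m) := by
        rw [coeff_subs]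
        apply Finset.sum_congr rfl
        intro m _
        by_cases hdm : deg m ≤ deg e
        · rw [coeff_subs]
          rw [subsum hψ m (fun l => coeff (R := K) l f) _ S
            (fun l hl => ⟨fun _ => hmemS l (by omega), fun _ =>
              Finset.mem_Iio.mpr (lt_NN_of_deg_le hn hl)⟩)]
        · push_neg at hdm
          have hm0 : m ≠ 0 := by
            intro hc; subst hc
            rw [(deg_eq_zero_iff _).mpr rfl] at hdm; omega
          rw [coeff_prodPow_eq_zero hχ hdm, mul_zero, mul_zero]
    _ = ∑ l ∈ S, coeff (R := K) l f * ∑ m ∈ S, coeff (R := K) m (prodPow ψ l) * coeff (R := K) e (prodPow χ m) := by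
        simp only [Finset.sum_mul]
        rw [Finset.sum_comm]
        apply Finset.sum_congr rfl
        intro l _
        rw [Finset.mul_sum]
        apply Finset.sum_congr rfl
        intro m _
        ring
    _ = ∑ l ∈ S, coeff (R := K) l f * coeff (R := K) e (prodPow (fun j => subs χ (ψ j)) l) := by
        apply Finset.sum_congr rfl
        intro l _
        rw [← subs_prodPow hn hχ (deg l) l rfl, coeff_subs]
    _ = coeff (R := K) e (subs (fun j => subs χ (ψ j)) f) := by rw [coeff_subs]

lemma const0_idSys : Const0 (idSys : Sys n K) := fun j => MvPowerSeries.coeff_zero_X j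

lemma const0_comp {φ χ : Sys n K} (hφ : Const0 φ) (hχ : Const0 χ) : Const0 (comp φ χ) :=
  fun i => by rw [comp_eq_subs]; exact subs_const0 hχ (hφ i)

lemma const0_iterComp {φ : Sys n K} (hφ : Const0 φ) (m : ℕ) : Const0 (iterComp φ m) := by
  induction m with
  | zero => exact const0_idSys
  | succ m ih => exact const0_comp ih hφ

lemma comp_assoc (hn : n ≠ 0) {φ ψ χ : Sys n K} (hψ : Const0 ψ) (hχ : Const0 χ) :
    comp (comp φ ψ) χ = comp φ (comp ψ χ) := by
  funext i
  rw [comp_eq_subs, comp_eq_subs, comp_eq_subs, subs_assoc hn hψ hχ]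
  rfl

lemma comp_idSys (hn : n ≠ 0) (φ : Sys n K) : comp φ idSys = φ := by
  funext i
  rw [comp_eq_subs]
  exact MvPowerSeries.ext fun e => subs_idSys hn (φ i) e

lemma idSys_comp {χ : Sys n K} (hχ : Const0 χ) : comp idSys χ = χ := by
  funext i
  rw [comp_eq_subs]
  exact MvPowerSeries.ext fun e => subs_X hχ i e

lemma iter_comm (hn : n ≠ 0) {ψ : Sys n K} (hψ : Const0 ψ) (m : ℕ) :
    comp (iterComp ψ m) ψ = comp ψ (iterComp ψ m) := by
  induction m with
  | zero => rw [iterComp, idSys_comp hψ, comp_idSys hn]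
  | succ m ih =>
    show comp (comp (iterComp ψ m) ψ) ψ = _
    rw [ih, comp_assoc hn (const0_iterComp hψ m) hψ]
    rfl

/-- Linear coefficient of a substitution. -/
lemma subs_lin {χ : Sys n K} {c : K} (hχ : Const0 χ)
    (hχlin : ∀ i j, coeff (R := K) (Finsupp.single j 1) (χ i) = if i = j then c else 0)
    (F : MvPowerSeries (Fin n) K) (hF0 : coeff (R := K) 0 F = 0) (i' : Fin n) :
    coeff (R := K) (Finsupp.single i' 1) (subs χ F) = c * coeff (R := K) (Finsupp.single i' 1) F := by
  have hn : n ≠ 0 := fun h0 => by subst h0; exact i'.elim0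
  set e := Finsupp.single i' 1 with he
  have hde : deg e = 1 := deg_single i' 1
  rw [coeff_subs]
  have hsubset : (Finset.univ.image fun j : Fin n => Finsupp.single j 1) ⊆
      Finset.Iio (NN e) := by
    intro m hm
    rw [Finset.mem_image] at hm
    obtain ⟨j', _, rfl⟩ := hm
    rw [Finset.mem_Iio]
    exact lt_NN_of_deg_le hn (by rw [deg_single]; omega)
  rw [← Finset.sum_subset hsubset (fun m hm hmim => ?_)]
  · rw [Finset.sum_image
      (fun x _ y _ hxy => Finsupp.single_left_injective (one_ne_zero) hxy)]
    rw [Finset.sum_eq_single i']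
    · rw [prodPow_single, pow_one, hχlin i' i', if_pos rfl, mul_comm]
    · intro j _ hj
      rw [prodPow_single, pow_one, hχlin j i', if_neg hj, mul_zero]
    · intro hc
      exact absurd (Finset.mem_univ i') hc
  · by_cases hm0 : m = 0
    · subst hm0; rw [hF0, zero_mul]
    · have h1 : 1 ≤ deg m := deg_pos_of_ne_zero hm0
      by_cases hdm : deg m = 1
      · obtain ⟨j, rfl⟩ := deg_eq_one hdm
        exact absurd (Finset.mem_image.mpr ⟨j, Finset.mem_univ j, rfl⟩) hmim
      · rw [coeff_prodPow_eq_zero hχ (by omega), mul_zero]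

lemma coeff_iterComp_succ (χ : Sys n K) (m : ℕ) (i : Fin n) (e : Fin n →₀ ℕ) :
    coeff (R := K) e (iterComp χ (m + 1) i) = coeff (R := K) e (subs χ (iterComp χ m i)) := rfl

lemma coeff_iterComp_zero (χ : Sys n K) (i : Fin n) (e : Fin n →₀ ℕ) :
    coeff (R := K) e (iterComp χ 0 i) = coeff (R := K) e (idSys i) := rfl

attribute [irreducible] subs

lemma coeff_homC (k : ℕ) (φ : Sys n K) (i : Fin n) (e : Fin n →₀ ℕ) :
    coeff (R := K) e (homC k φ i) = if deg e = k then coeff (R := K) e (φ i) else 0 := rfl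

lemma coeff_truncLE (m : ℕ) (φ : Sys n K) (i : Fin n) (e : Fin n →₀ ℕ) :
    coeff (R := K) e (truncLE m φ i) = if deg e ≤ m then coeff (R := K) e (φ i) else 0 := rfl

/-- Let `p ≥ 2` be not divisible by `char K`, `ω` a primitive `p`-th root of
unity and `k ≥ 1`.  If `φ = ω·id + Σ_{i=2}^{pk} φ_i` is `p`-periodic modulo degree `pk` and
`ψ = φ + u` with `u = -(ω/p)·(φ^p)_{pk+1}`, then `(ψ^p)_r = 0` for `pk+2 ≤ r ≤ pk+p`. -/
theorem next_components_vanish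
    (n : ℕ) (K : Type) [Field K] (p : ℕ) (hp : 2 ≤ p) (hchar : ¬ (ringChar K ∣ p))
    (ω : K) (hω : IsPrimitiveRoot ω p) (k : ℕ) (hk : 1 ≤ k)
    (φ : Sys n K) (hφ0 : homC 0 φ = 0) (hφ1 : homC 1 φ = ω • idSys)
    (hhigh : ∀ j : ℕ, p * k < j → homC j φ = 0)
    (hper : truncLE (p * k) (iterComp φ p) = idSys) :
    ∀ r : ℕ, p * k + 2 ≤ r → r ≤ p * k + p →
      homC r
        (iterComp (φ + (-(ω / (p : K))) • homC (p * k + 1) (iterComp φ p)) p) = 0 := by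
  intro r hr1 hr2
  by_cases hn : n = 0
  · subst hn
    funext i
    exact i.elim0
  set N := p * k with hN
  have hpN : p ≤ N := Nat.le_mul_of_pos_right p (by omega)
  have hN2 : 2 ≤ N := le_trans hp hpN
  -- basic coefficient facts about φ
  have hφc0 : Const0 φ := by
    intro i
    have h := congrArg (coeff (R := K) (0 : Fin n →₀ ℕ)) (congrFun hφ0 i)
    rw [coeff_homC, if_pos ((deg_eq_zero_iff _).mpr rfl)] at h
    simpa using h
  have hφlin : ∀ i j, coeff (R := K) (Finsupp.single j 1) (φ i) = if i = j then ω else 0 := by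
    intro i j
    have h := congrArg (coeff (R := K) (Finsupp.single j 1)) (congrFun hφ1 i)
    rw [coeff_homC, if_pos (deg_single j 1)] at h
    rw [h]
    show coeff (R := K) (Finsupp.single j 1) ((ω • idSys : Sys n K) i) = _
    rw [Pi.smul_apply, MvPowerSeries.coeff_smul]
    show ω * coeff (R := K) (Finsupp.single j 1) (MvPowerSeries.X i) = _
    rw [MvPowerSeries.coeff_X]
    by_cases hij : i = j
    · subst hij; rw [if_pos rfl, if_pos rfl, mul_one]
    · rw [if_neg (fun hc => hij (Finsupp.single_left_injective one_ne_zero hc).symm),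
        if_neg hij, mul_zero]
  have hωp : ω ^ p = 1 := hω.pow_eq_one
  have hωN : ω ^ N = 1 := by rw [hN, pow_mul, hωp, one_pow]
  have hpK : (p : K) ≠ 0 := by
    intro hc
    have hcp : CharP K (ringChar K) := ringChar.charP K
    exact hchar ((CharP.cast_eq_zero_iff K (ringChar K) p).mp hc)
  have hωne : ω ≠ 0 := by
    intro hc
    rw [hc, zero_pow (by omega : p ≠ 0)] at hωp
    exact zero_ne_one hωp
  -- the perturbation u and the perturbed system ψ
  set u : Sys n K := (-(ω / (p : K))) • homC (N + 1) (iterComp φ p) with hu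
  set ψ : Sys n K := φ + u with hψ
  clear_value u ψ
  have hcu : ∀ i e, coeff (R := K) e (u i) =
      -(ω / (p : K)) * (if deg e = N + 1 then coeff (R := K) e (iterComp φ p i) else 0) := by
    intro i e
    rw [hu, Pi.smul_apply, MvPowerSeries.coeff_smul, coeff_homC]
  have hu_high : ∀ i e, deg e ≠ N + 1 → coeff (R := K) e (u i) = 0 := by
    intro i e hne
    rw [hcu, if_neg hne, mul_zero]
  have hψφ : ∀ i e, deg e ≠ N + 1 → coeff (R := K) e (ψ i) = coeff (R := K) e (φ i) := by
    intro i e hne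
    rw [hψ, Pi.add_apply, map_add, hu_high i e hne, add_zero]
  have hψc0 : Const0 ψ := by
    intro i
    rw [hψφ i 0 (by rw [(deg_eq_zero_iff _).mpr rfl]; omega)]
    exact hφc0 i
  have hψlin : ∀ i j, coeff (R := K) (Finsupp.single j 1) (ψ i) = if i = j then ω else 0 := by
    intro i j
    rw [hψφ i _ (by rw [deg_single]; omega)]
    exact hφlin i j
  have hψφagree : ∀ j e', deg e' ≤ N → coeff (R := K) e' (ψ j) = coeff (R := K) e' (φ j) :=
    fun j e' h => hψφ j e' (by omega)
  -- linear parts of the iterates of ψ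
  have hLψ : ∀ m, ∀ i j', coeff (R := K) (Finsupp.single j' 1) (iterComp ψ m i) =
      if i = j' then ω ^ m else 0 := by
    intro m
    induction m with
    | zero =>
      intro i j'
      show coeff (R := K) (Finsupp.single j' 1) (MvPowerSeries.X i) = _
      rw [MvPowerSeries.coeff_X]
      by_cases hij : i = j'
      · subst hij; rw [if_pos rfl, if_pos rfl, pow_zero]
      · rw [if_neg (fun hc => hij (Finsupp.single_left_injective one_ne_zero hc).symm),
          if_neg hij]
    | succ m ih =>
      intro i j'
      rw [coeff_iterComp_succ]
      rw [subs_lin hψc0 hψlin _ (const0_iterComp hψc0 m i) j', ih i j']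
      by_cases hij : i = j'
      · rw [if_pos hij, if_pos hij, pow_succ, mul_comm]
      · rw [if_neg hij, if_neg hij, mul_zero]
  -- (A): agreement of the iterates of ψ and φ in degrees ≤ N
  have hA : ∀ m, ∀ i e, deg e ≤ N →
      coeff (R := K) e (iterComp ψ m i) = coeff (R := K) e (iterComp φ m i) := by
    intro m
    induction m with
    | zero => intro i e _; rfl
    | succ m ih =>
      intro i e he
      rw [coeff_iterComp_succ, coeff_iterComp_succ]
      exact subs_dep hψc0 hφc0 N hψφagree (fun m' hm' => ih i m' hm') he
  -- (B): first variation at degree N+1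
  have hB : ∀ m, ∀ i e, deg e = N + 1 →
      coeff (R := K) e (iterComp ψ m i) =
        coeff (R := K) e (iterComp φ m i) + (m : K) * ω ^ (m - 1) * coeff (R := K) e (u i) := by
    intro m
    induction m with
    | zero =>
      intro i e he
      rw [coeff_iterComp_zero, coeff_iterComp_zero]
      simp
    | succ m ih =>
      intro i e he
      have hstep1 : coeff (R := K) e (iterComp ψ (m + 1) i) =
          coeff (R := K) e (subs φ (iterComp ψ m i)) + ω ^ m * coeff (R := K) e (u i) := by
        rw [coeff_iterComp_succ]
        rw [subs_fvi hn hψc0 hφc0 (r := N + 1) (by omega)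
          (fun j e' he' => hψφ j e' (by omega)) (iterComp ψ m i) he]
        congr 1
        rw [Finset.sum_eq_single i]
        · rw [hLψ m i i, if_pos rfl]
          have hd : coeff (R := K) e (ψ i) - coeff (R := K) e (φ i) = coeff (R := K) e (u i) := by
            rw [hψ, Pi.add_apply, map_add]; ring
          rw [hd]
        · intro j _ hj
          rw [hLψ m i j, if_neg (fun hc => hj hc.symm), zero_mul]
        · intro hc
          exact absurd (Finset.mem_univ i) hc
      have hVi : ∀ m', deg m' < N + 1 →
          coeff (R := K) m' (iterComp ψ m i - iterComp φ m i) = 0 := by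
        intro m' hm'
        rw [map_sub, hA m i m' (by omega), sub_self]
      have hstep2 : coeff (R := K) e (subs φ (iterComp ψ m i)) =
          coeff (R := K) e (iterComp φ (m + 1) i) +
            ω ^ (N + 1) * ((m : K) * ω ^ (m - 1) * coeff (R := K) e (u i)) := by
        have hsplit : iterComp ψ m i = iterComp φ m i + (iterComp ψ m i - iterComp φ m i) := by
          ring
        have hhigh2 : coeff (R := K) e (subs φ (iterComp ψ m i - iterComp φ m i)) =
            ω ^ (N + 1) * coeff (R := K) e (iterComp ψ m i - iterComp φ m i) :=
          subs_high hn hφc0 hφlin hVi he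
        calc coeff (R := K) e (subs φ (iterComp ψ m i))
            = coeff (R := K) e (subs φ (iterComp φ m i + (iterComp ψ m i - iterComp φ m i))) := by
              rw [← hsplit]
          _ = coeff (R := K) e (subs φ (iterComp φ m i)) +
              coeff (R := K) e (subs φ (iterComp ψ m i - iterComp φ m i)) :=
              subs_add_coeff _ _ _ _
          _ = coeff (R := K) e (iterComp φ (m + 1) i) +
              ω ^ (N + 1) * ((m : K) * ω ^ (m - 1) * coeff (R := K) e (u i)) := by
              rw [hhigh2, map_sub, ih i e he]
              rw [(coeff_iterComp_succ φ m i e).symm]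
              ring
      have harith : ω ^ (N + 1) * ((m : K) * ω ^ (m - 1)) + ω ^ m =
          ((m + 1 : ℕ) : K) * ω ^ ((m + 1) - 1) := by
        cases m with
        | zero => simp
        | succ m' =>
          have h1 : ω ^ (N + 1) * ω ^ (m' + 1 - 1) = ω ^ (m' + 1) := by
            rw [Nat.add_sub_cancel, ← pow_add]
            have hee : N + 1 + m' = N + (m' + 1) := by omega
            rw [hee, pow_add, hωN, one_mul]
          have h2 : (m' + 1 + 1) - 1 = m' + 1 := by omega
          rw [h2]
          push_cast
          calc ω ^ (N + 1) * (((m' : K) + 1) * ω ^ (m' + 1 - 1)) + ω ^ (m' + 1)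
              = ((m' : K) + 1) * (ω ^ (N + 1) * ω ^ (m' + 1 - 1)) + ω ^ (m' + 1) := by ring
            _ = ((m' : K) + 1) * ω ^ (m' + 1) + ω ^ (m' + 1) := by rw [h1]
            _ = ((m' : K) + 1 + 1) * ω ^ (m' + 1) := by ring
      rw [hstep1, hstep2]
      linear_combination coeff (R := K) e (u i) * harith
  -- Ψ := ψ^p agrees with the identity up to degree N+1
  set Ψ := iterComp ψ p with hΨ
  clear_value Ψ
  have hΨc0 : Const0 Ψ := by rw [hΨ]; exact const0_iterComp hψc0 p
  have hper' : ∀ i e, deg e ≤ N → coeff (R := K) e (iterComp φ p i) = coeff (R := K) e (idSys i) := by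
    intro i e he
    have h := congrArg (coeff (R := K) e) (congrFun hper i)
    rw [coeff_truncLE, if_pos he] at h
    exact h
  have hE : ∀ i e, deg e ≤ N + 1 → coeff (R := K) e (Ψ i) = coeff (R := K) e (idSys i) := by
    intro i e he
    by_cases hle : deg e ≤ N
    · rw [hΨ, hA p i e hle, hper' i e hle]
    · have he1 : deg e = N + 1 := by omega
      have hx : coeff (R := K) e (u i) = -(ω / (p : K)) * coeff (R := K) e (iterComp φ p i) := by
        rw [hcu, if_pos he1]
      have hXz : coeff (R := K) e (idSys i) = 0 := by
        show coeff (R := K) e (MvPowerSeries.X i) = 0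
        rw [MvPowerSeries.coeff_X, if_neg]
        intro hc
        rw [hc, deg_single] at he1
        omega
      rw [hΨ, hB p i e he1, hx, hXz]
      have hfac : (p : K) * ω ^ (p - 1) * (-(ω / (p : K))) = -1 := by
        have hh : ω ^ (p - 1) * ω = 1 := by
          rw [← pow_succ, Nat.sub_add_cancel (by omega : 1 ≤ p), hωp]
        calc (p : K) * ω ^ (p - 1) * (-(ω / (p : K)))
            = -(((p : K) / (p : K)) * (ω ^ (p - 1) * ω)) := by ring
          _ = -1 := by rw [div_self hpK, hh, mul_one]
      linear_combination coeff (R := K) e (iterComp φ p i) * hfac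
  -- the commutation step
  have hAB : ∀ r', N + 2 ≤ r' → r' ≤ N + p →
      (∀ i e, deg e < r' → coeff (R := K) e (Ψ i) = coeff (R := K) e (idSys i)) →
      ∀ i e, deg e = r' → coeff (R := K) e (Ψ i) = 0 := by
    intro r' hr'1 hr'2 hist i e he
    have hXz : coeff (R := K) e (MvPowerSeries.X i : MvPowerSeries (Fin n) K) = 0 := by
      rw [MvPowerSeries.coeff_X, if_neg]
      intro hc
      rw [hc, deg_single] at he
      omega
    have histQ : ∀ m', deg m' < r' → coeff (R := K) m' (Ψ i - MvPowerSeries.X i) = 0 := by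
      intro m' hm'
      rw [map_sub, hist i m' hm']
      exact sub_self _
    have h1 : coeff (R := K) e (comp Ψ ψ i) = coeff (R := K) e (ψ i) + ω ^ r' * coeff (R := K) e (Ψ i) := by
      rw [comp_eq_subs]
      have hsplit : Ψ i = MvPowerSeries.X i + (Ψ i - MvPowerSeries.X i) := by ring
      conv_lhs => rw [hsplit]
      rw [subs_add_coeff]
      congr 1
      · exact subs_X hψc0 i e
      · rw [subs_high hn hψc0 hψlin histQ he, map_sub, hXz, sub_zero]
    have h2 : coeff (R := K) e (comp ψ Ψ i) = coeff (R := K) e (ψ i) + ω * coeff (R := K) e (Ψ i) := by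
      rw [comp_eq_subs]
      rw [subs_fvi hn hΨc0 const0_idSys (r := r') (by omega) hist (ψ i) he]
      congr 1
      · exact subs_idSys hn (ψ i) e
      · have hXz' : coeff (R := K) e (idSys i) = 0 := hXz
        rw [Finset.sum_eq_single i]
        · rw [hψlin i i, if_pos rfl, hXz', sub_zero]
        · intro j _ hj
          rw [hψlin i j, if_neg (fun hc => hj hc.symm), zero_mul]
        · intro hc
          exact absurd (Finset.mem_univ i) hc
    have heq : coeff (R := K) e (comp Ψ ψ i) = coeff (R := K) e (comp ψ Ψ i) := by
      rw [hΨ]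
      exact congrArg (coeff (R := K) e) (congrFun (iter_comm hn hψc0 p) i)
    rw [h1, h2] at heq
    have hpow : ω ^ r' = ω ^ (r' - 1) * ω := by
      rw [← pow_succ, Nat.sub_add_cancel (by omega : 1 ≤ r')]
    rw [hpow] at heq
    have hfac : (ω ^ (r' - 1) - 1) * (ω * coeff (R := K) e (Ψ i)) = 0 := by
      linear_combination heq
    have hω1 : ω ^ (r' - 1) ≠ 1 := by
      have ht : r' - 1 = N + (r' - 1 - N) := by omega
      rw [ht, pow_add, hωN, one_mul]
      exact hω.pow_ne_one_of_pos_of_lt (by omega) (by omega)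
    rcases mul_eq_zero.mp hfac with h | h
    · exact absurd (sub_eq_zero.mp h) hω1
    · rcases mul_eq_zero.mp h with h' | h'
      · exact absurd h' hωne
      · exact h'
  -- history builder
  have hG : ∀ t : ℕ, N + 2 + t ≤ N + p + 1 →
      ∀ i e, deg e < N + 2 + t → coeff (R := K) e (Ψ i) = coeff (R := K) e (idSys i) := by
    intro t
    induction t with
    | zero => intro _ i e he; exact hE i e (by omega)
    | succ t ih =>
      intro hle i e he
      by_cases hlt : deg e < N + 2 + t
      · exact ih (by omega) i e hlt
      · have hde : deg e = N + 2 + t := by omega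
        rw [hAB (N + 2 + t) (by omega) (by omega) (ih (by omega)) i e hde]
        symm
        show coeff (R := K) e (MvPowerSeries.X i) = 0
        rw [MvPowerSeries.coeff_X, if_neg]
        intro hc
        rw [hc, deg_single] at hde
        omega
  -- conclusion
  funext i
  apply MvPowerSeries.ext
  intro e
  rw [coeff_homC]
  show _ = coeff (R := K) e (0 : MvPowerSeries (Fin n) K)
  rw [map_zero]
  by_cases hde : deg e = r
  · rw [if_pos hde]
    exact hAB r hr1 hr2
      (fun i' e' he' => hG (r - (N + 2)) (by omega) i' e' (by omega)) i e hde
  · rw [if_neg hde]
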